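/- Let C ⊆ B(H) be a C*-subalgebra acting nondegenerately on a complex Hilbert space H, let C⊗K ⊆ B(ℓ²(ℕ,H)) be the closed linear span of {E_{ij}(c) : c ∈ C, i,j ∈ ℕ}, and let M(C⊗K) denote the idealizer of C⊗K in B(ℓ²(ℕ,H)). Then Z(M(C⊗K)) = Z(M(C)) ⊗ ℂI; that is, the center of the idealizer of C⊗K equals {S⊗I : S ∈ Z(M(C))}, where M(C) is the idealizer of C in B(H). -/

import Mathlib

noncomputable section

open scoped ENNReal

variable {H : Type} [NormedAddCommGroup H] [InnerProductSpace ℂ H] [CompleteSpace H]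

abbrev L2 (H : Type) [NormedAddCommGroup H] [InnerProductSpace ℂ H] : Type :=
  lp (fun _ : ℕ => H) 2

theorem lp_single_add (i : ℕ) (a b : H) :
    lp.single (E := fun _ : ℕ => H) 2 i (a + b) = lp.single 2 i a + lp.single 2 i b := by
  apply lp.ext
  funext k
  by_cases h : k = i
  · subst h
    simp [lp.coeFn_add, lp.single_apply_self]
  · simp [lp.coeFn_add, lp.single_apply_ne 2 i _ h]

/-- The operator `E_{ij}(a)` on `ℓ²(ℕ, H)`: `(E_{ij}(a) x)_k = a (x_j)` if `k = i`, else `0`. -/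
def Eij (a : H →L[ℂ] H) (i j : ℕ) : L2 H →L[ℂ] L2 H :=
  LinearMap.mkContinuous
    { toFun := fun x => lp.single 2 i (a (x j))
      map_add' := fun x y => by
        dsimp only
        rw [lp.coeFn_add, Pi.add_apply, map_add, lp_single_add]
      map_smul' := fun c x => by
        dsimp only
        rw [lp.coeFn_smul, Pi.smul_apply, map_smul, lp.single_smul]
        rfl }
    ‖a‖ (fun x => by
      have h1 : ‖lp.single (E := fun _ : ℕ => H) 2 i (a (x j))‖ = ‖a (x j)‖ := by
        simpa using lp.norm_single (p := 2) (by norm_num) (fun _ : ℕ => a (x j)) i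
      calc ‖lp.single (E := fun _ : ℕ => H) 2 i (a (x j))‖ = ‖a (x j)‖ := h1
        _ ≤ ‖a‖ * ‖x j‖ := a.le_opNorm _
        _ ≤ ‖a‖ * ‖x‖ := by
            gcongr
            exact lp.norm_apply_le_norm (by norm_num) x j)

@[simp] theorem Eij_apply (a : H →L[ℂ] H) (i j : ℕ) (x : L2 H) :
    Eij a i j x = lp.single 2 i (a (x j)) := rfl

theorem amplify_memℓp (S : H →L[ℂ] H) (x : L2 H) : Memℓp (fun k => S (x k)) 2 := by
  have ht : (0 : ℝ) < (2 : ℝ≥0∞).toReal := by norm_num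
  apply memℓp_gen
  have hx : Summable fun k => ‖x k‖ ^ (2 : ℝ≥0∞).toReal := (lp.memℓp x).summable ht
  refine Summable.of_nonneg_of_le (fun k => Real.rpow_nonneg (norm_nonneg _) _)
    (fun k => ?_) (hx.mul_left (‖S‖ ^ (2 : ℝ≥0∞).toReal))
  calc ‖S (x k)‖ ^ (2 : ℝ≥0∞).toReal
      ≤ (‖S‖ * ‖x k‖) ^ (2 : ℝ≥0∞).toReal :=
        Real.rpow_le_rpow (norm_nonneg _) (S.le_opNorm _) ht.le
    _ = ‖S‖ ^ (2 : ℝ≥0∞).toReal * ‖x k‖ ^ (2 : ℝ≥0∞).toReal :=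
        Real.mul_rpow (norm_nonneg _) (norm_nonneg _)

/-- The amplification `S ⊗ I` on `ℓ²(ℕ, H)`: `((S ⊗ I) x)_k = S (x_k)`. -/
def amplify (S : H →L[ℂ] H) : L2 H →L[ℂ] L2 H :=
  LinearMap.mkContinuous
    { toFun := fun x => (⟨fun k => S (x k), amplify_memℓp S x⟩ : L2 H)
      map_add' := fun x y => by
        apply lp.ext
        funext k
        show S ((x + y) k) = (_ + _ : L2 H) k
        rw [lp.coeFn_add, lp.coeFn_add, Pi.add_apply, Pi.add_apply, map_add]
      map_smul' := fun c x => by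
        apply lp.ext
        funext k
        show S ((c • x) k) = (c • _ : L2 H) k
        rw [lp.coeFn_smul, lp.coeFn_smul, Pi.smul_apply, Pi.smul_apply, map_smul] }
    ‖S‖ (fun x => by
      dsimp only
      have ht : (0 : ℝ) < (2 : ℝ≥0∞).toReal := by norm_num
      set t := (2 : ℝ≥0∞).toReal with htdef
      rw [← Real.rpow_le_rpow_iff (norm_nonneg _) (mul_nonneg (norm_nonneg S) (norm_nonneg x)) ht,
        Real.mul_rpow (norm_nonneg S) (norm_nonneg x), lp.norm_rpow_eq_tsum ht,
        lp.norm_rpow_eq_tsum ht x, ← tsum_mul_left]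
      have hsum1 : Summable fun k => ‖S (x k)‖ ^ t :=
        ((amplify_memℓp S x).summable ht)
      have hsum2 : Summable fun k => ‖S‖ ^ t * ‖x k‖ ^ t :=
        ((lp.memℓp x).summable ht).mul_left _
      refine Summable.tsum_le_tsum (fun k => ?_) hsum1 hsum2
      calc ‖S (x k)‖ ^ t ≤ (‖S‖ * ‖x k‖) ^ t :=
            Real.rpow_le_rpow (norm_nonneg _) (S.le_opNorm _) ht.le
        _ = ‖S‖ ^ t * ‖x k‖ ^ t := Real.mul_rpow (norm_nonneg _) (norm_nonneg _))

@[simp] theorem amplify_apply (S : H →L[ℂ] H) (x : L2 H) (k : ℕ) :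
    amplify S x k = S (x k) := rfl

/-- The commutant `S' := {T : T s = s T for all s ∈ S}` of a set. -/
def commutant {R : Type*} [Mul R] (S : Set R) : Set R :=
  {T | ∀ s ∈ S, T * s = s * T}

/-- The center `Z(M) := {T ∈ M : T S = S T for all S ∈ M}` of a set. -/
def centerSet {R : Type*} [Mul R] (M : Set R) : Set R :=
  M ∩ commutant M

/-- The idealizer `{T : T C ⊆ C and C T ⊆ C}` of a set, which for a nondegenerately acting
C*-subalgebra of `B(H)` realizes its multiplier algebra `M(C)`. -/
def idealizer {R : Type*} [Mul R] (C : Set R) : Set R :=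
  {T | ∀ c ∈ C, T * c ∈ C ∧ c * T ∈ C}

/-- `A ⊗ K`: the closed linear span of the operators `E_{ij}(a)`, `a ∈ A`, `i j : ℕ`,
inside `B(ℓ²(ℕ, H))`. -/
def tensorK (A : Set (H →L[ℂ] H)) : Set (L2 H →L[ℂ] L2 H) :=
  closure (↑(Submodule.span ℂ
    {T : L2 H →L[ℂ] L2 H | ∃ a ∈ A, ∃ i j : ℕ, T = Eij a i j}) : Set (L2 H →L[ℂ] L2 H))
set_option linter.unusedSectionVars false
theorem lp_single_zero (i : ℕ) : lp.single (E := fun _ : ℕ => H) 2 i (0 : H) = 0 := by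
  apply lp.ext
  funext k
  by_cases h : k = i
  · subst h; simp [lp.single_apply_self]
  · simp [lp.single_apply_ne 2 i _ h]

theorem ext_of_singles {A B : L2 H →L[ℂ] L2 H}
    (h : ∀ (i : ℕ) (ξ : H), A (lp.single 2 i ξ) = B (lp.single 2 i ξ)) : A = B := by
  apply ContinuousLinearMap.ext
  intro x
  have hs := lp.hasSum_single (p := 2) (E := fun _ : ℕ => H) (by norm_num) x
  have hA := A.hasSum hs
  have hB := B.hasSum hs
  simp_rw [h] at hA
  exact hA.unique hB

theorem amplify_single (S : H →L[ℂ] H) (i : ℕ) (ξ : H) :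
    amplify S (lp.single 2 i ξ) = lp.single 2 i (S ξ) := by
  apply lp.ext
  funext k
  show S ((lp.single 2 i ξ : L2 H) k) = _
  by_cases h : k = i
  · subst h; rw [lp.single_apply_self, lp.single_apply_self]
  · rw [lp.single_apply_ne 2 i _ h, lp.single_apply_ne 2 i _ h, map_zero]

theorem Eij_single (a : H →L[ℂ] H) (i j m : ℕ) (ξ : H) :
    Eij a i j (lp.single 2 m ξ) = if j = m then lp.single 2 i (a ξ) else 0 := by
  rw [Eij_apply]
  by_cases h : j = m
  · subst h; rw [lp.single_apply_self, if_pos rfl]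
  · rw [lp.single_apply_ne 2 m _ h, map_zero, lp_single_zero, if_neg h]

theorem mul_apply' (A B : L2 H →L[ℂ] L2 H) (x : L2 H) : (A * B) x = A (B x) := rfl

theorem amplify_mul_Eij (S a : H →L[ℂ] H) (i j : ℕ) :
    amplify S * Eij a i j = Eij (S * a) i j := by
  apply ContinuousLinearMap.ext
  intro x
  rw [mul_apply', Eij_apply, Eij_apply, amplify_single]
  rfl

theorem Eij_mul_amplify (a S : H →L[ℂ] H) (i j : ℕ) :
    Eij a i j * amplify S = Eij (a * S) i j := by
  apply ContinuousLinearMap.ext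
  intro x
  rw [mul_apply', Eij_apply, Eij_apply, amplify_apply]
  rfl

theorem Eij_mul_Eij (a b : H →L[ℂ] H) (i j k l : ℕ) :
    Eij a i j * Eij b k l = if j = k then Eij (a * b) i l else 0 := by
  apply ContinuousLinearMap.ext
  intro x
  rw [mul_apply', Eij_apply, Eij_apply]
  by_cases h : j = k
  · subst h
    rw [lp.single_apply_self, if_pos rfl, Eij_apply]
    rfl
  · rw [lp.single_apply_ne 2 k _ h, map_zero, lp_single_zero, if_neg h]
    simp

/-- The coordinate projection `ℓ²(ℕ,H) → H`. -/
def projCLM (i : ℕ) : L2 H →L[ℂ] H :=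
  LinearMap.mkContinuous
    { toFun := fun x => x i
      map_add' := fun x y => by simp [lp.coeFn_add]
      map_smul' := fun c x => by simp [lp.coeFn_smul] }
    1 (fun x => by rw [one_mul]; exact lp.norm_apply_le_norm (by norm_num) x i)

/-- `lp.single` as a continuous linear map. -/
def singleCLM (i : ℕ) : H →L[ℂ] L2 H :=
  LinearMap.mkContinuous
    { toFun := fun ξ => lp.single 2 i ξ
      map_add' := fun a b => lp_single_add i a b
      map_smul' := fun c a => by simp [lp.single_smul] }
    1 (fun ξ => by
      rw [one_mul]
      exact le_of_eq (by simpa using lp.norm_single (p := 2) (by norm_num) (fun _ : ℕ => ξ) i))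

/-- The `(i,j)` matrix entry of an operator on `ℓ²(ℕ,H)`, as a continuous linear map
in the operator. -/
def entryL (i j : ℕ) : (L2 H →L[ℂ] L2 H) →L[ℂ] (H →L[ℂ] H) :=
  ((ContinuousLinearMap.compL ℂ H (L2 H) H).flip (singleCLM j)).comp
    (ContinuousLinearMap.compL ℂ (L2 H) (L2 H) H (projCLM i))

@[simp] theorem entryL_apply (i j : ℕ) (T : L2 H →L[ℂ] L2 H) (ξ : H) :
    entryL i j T ξ = (T (lp.single 2 j ξ)) i := rfl

theorem entryL_Eij (i j k l : ℕ) (a : H →L[ℂ] H) :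
    entryL i j (Eij a k l) = if i = k ∧ j = l then a else 0 := by
  apply ContinuousLinearMap.ext
  intro ξ
  rw [entryL_apply, Eij_single]
  by_cases h1 : l = j
  · subst h1
    rw [if_pos rfl]
    by_cases h2 : i = k
    · subst h2
      rw [lp.single_apply_self, if_pos ⟨rfl, rfl⟩]
    · rw [lp.single_apply_ne 2 k _ h2, if_neg (fun hx => h2 hx.1)]
      rfl
  · rw [if_neg h1, if_neg (fun hx => h1 hx.2.symm)]
    simp

theorem Eij_mem_tensorK {A : Set (H →L[ℂ] H)} {a : H →L[ℂ] H} (ha : a ∈ A) (i j : ℕ) :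
    Eij a i j ∈ tensorK A :=
  subset_closure (Submodule.subset_span ⟨a, ha, i, j, rfl⟩)

theorem zero_mem_tensorK (A : Set (H →L[ℂ] H)) : (0 : L2 H →L[ℂ] L2 H) ∈ tensorK A :=
  subset_closure (Submodule.zero_mem _)

/-- If a continuous linear operation maps every generator `Eij a i j` into `tensorK A`,
then it maps all of `tensorK A` into itself. -/
theorem tensorK_mapsTo (L : (L2 H →L[ℂ] L2 H) →L[ℂ] (L2 H →L[ℂ] L2 H)) (A : Set (H →L[ℂ] H))
    (h : ∀ a ∈ A, ∀ i j : ℕ, L (Eij a i j) ∈ tensorK A) :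
    ∀ T ∈ tensorK A, L T ∈ tensorK A := by
  intro T hT
  set M := (Submodule.span ℂ
    {T : L2 H →L[ℂ] L2 H | ∃ a ∈ A, ∃ i j : ℕ, T = Eij a i j}).topologicalClosure with hMdef
  have hM : tensorK A = ↑M := (Submodule.topologicalClosure_coe _).symm
  have hsub : Submodule.span ℂ
      {T : L2 H →L[ℂ] L2 H | ∃ a ∈ A, ∃ i j : ℕ, T = Eij a i j}
      ≤ Submodule.comap (L : (L2 H →L[ℂ] L2 H) →ₗ[ℂ] (L2 H →L[ℂ] L2 H)) M := by
    rw [Submodule.span_le]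
    rintro x ⟨a, ha, i, j, rfl⟩
    have := h a ha i j
    rw [hM] at this
    exact this
  have hclosed : IsClosed ((Submodule.comap
      (L : (L2 H →L[ℂ] L2 H) →ₗ[ℂ] (L2 H →L[ℂ] L2 H)) M : Set (L2 H →L[ℂ] L2 H))) :=
    (Submodule.isClosed_topologicalClosure _).preimage L.continuous
  have hle := Submodule.topologicalClosure_minimal _ hsub hclosed
  rw [hM] at hT ⊢
  exact hle hT

theorem mul_mem_tensorK {A : Set (H →L[ℂ] H)} (hA : ∀ a ∈ A, ∀ b ∈ A, a * b ∈ A)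
    {X Y : L2 H →L[ℂ] L2 H} (hX : X ∈ tensorK A) (hY : Y ∈ tensorK A) :
    X * Y ∈ tensorK A := by
  have step1 : ∀ a ∈ A, ∀ i j : ℕ, Eij a i j * Y ∈ tensorK A := by
    intro a ha i j
    refine tensorK_mapsTo (ContinuousLinearMap.mul ℂ (L2 H →L[ℂ] L2 H) (Eij a i j)) A ?_ Y hY
    intro b hb k l
    show Eij a i j * Eij b k l ∈ tensorK A
    rw [Eij_mul_Eij]
    by_cases h : j = k
    · rw [if_pos h]; exact Eij_mem_tensorK (hA a ha b hb) i l
    · rw [if_neg h]; exact zero_mem_tensorK A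
  refine tensorK_mapsTo ((ContinuousLinearMap.mul ℂ (L2 H →L[ℂ] L2 H)).flip Y) A ?_ X hX
  intro a ha i j
  show Eij a i j * Y ∈ tensorK A
  exact step1 a ha i j

theorem entryL_mem_of_mem_tensorK (C : NonUnitalStarSubalgebra ℂ (H →L[ℂ] H))
    (hC : IsClosed (C : Set (H →L[ℂ] H))) (i j : ℕ) {T : L2 H →L[ℂ] L2 H}
    (hT : T ∈ tensorK (C : Set (H →L[ℂ] H))) : entryL i j T ∈ C := by
  have hspan : ∀ X ∈ Submodule.span ℂ
      {T : L2 H →L[ℂ] L2 H | ∃ a ∈ (C : Set (H →L[ℂ] H)), ∃ k l : ℕ, T = Eij a k l},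
      entryL i j X ∈ C := by
    intro X hX
    induction hX using Submodule.span_induction with
    | mem x hx =>
      obtain ⟨a, ha, k, l, rfl⟩ := hx
      rw [entryL_Eij]
      by_cases h : i = k ∧ j = l
      · rw [if_pos h]; exact ha
      · rw [if_neg h]; exact C.zero_mem
    | zero => rw [map_zero]; exact C.zero_mem
    | add x y _ _ hx hy => rw [map_add]; exact C.add_mem hx hy
    | smul c x _ hx => rw [map_smul]; exact C.smul_mem c hx
  have hclosed : IsClosed {X : L2 H →L[ℂ] L2 H | entryL i j X ∈ C} :=
    hC.preimage (entryL i j).continuous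
  exact hclosed.closure_subset_iff.2 hspan hT

theorem ext_nondeg (C : NonUnitalStarSubalgebra ℂ (H →L[ℂ] H))
    (hnondeg : Dense (↑(Submodule.span ℂ {x : H | ∃ c ∈ C, ∃ ξ : H, x = c ξ}) : Set H))
    {A B : H →L[ℂ] H} (h : ∀ c ∈ C, ∀ ξ : H, A (c ξ) = B (c ξ)) : A = B := by
  have hsub : (↑(Submodule.span ℂ {x : H | ∃ c ∈ C, ∃ ξ : H, x = c ξ}) : Set H)
      ⊆ {x : H | A x = B x} := by
    intro x hx
    induction hx using Submodule.span_induction with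
    | mem x hx => obtain ⟨c, hc, ξ, rfl⟩ := hx; exact h c hc ξ
    | zero => simp
    | add x y _ _ hx hy => simp only [Set.mem_setOf_eq] at *; rw [map_add, map_add, hx, hy]
    | smul c x _ hx => simp only [Set.mem_setOf_eq] at *; rw [map_smul, map_smul, hx]
  have hcl : IsClosed {x : H | A x = B x} := isClosed_eq A.continuous B.continuous
  have := hcl.closure_subset_iff.2 hsub
  rw [hnondeg.closure_eq] at this
  exact ContinuousLinearMap.ext fun x => this (Set.mem_univ x)

theorem amplify_mem_idealizer (C : NonUnitalStarSubalgebra ℂ (H →L[ℂ] H))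
    {S : H →L[ℂ] H} (hS : S ∈ idealizer (C : Set (H →L[ℂ] H))) :
    amplify S ∈ idealizer (tensorK (C : Set (H →L[ℂ] H))) := by
  intro X hX
  constructor
  · refine tensorK_mapsTo (ContinuousLinearMap.mul ℂ (L2 H →L[ℂ] L2 H) (amplify S)) _ ?_ X hX
    intro a ha i j
    show amplify S * Eij a i j ∈ _
    rw [amplify_mul_Eij]
    exact Eij_mem_tensorK (hS a ha).1 i j
  · refine tensorK_mapsTo ((ContinuousLinearMap.mul ℂ (L2 H →L[ℂ] L2 H)).flip (amplify S)) _ ?_ X hX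
    intro a ha i j
    show Eij a i j * amplify S ∈ _
    rw [Eij_mul_amplify]
    exact Eij_mem_tensorK (hS a ha).2 i j

theorem tensorK_subset_idealizer (C : NonUnitalStarSubalgebra ℂ (H →L[ℂ] H)) :
    tensorK (C : Set (H →L[ℂ] H)) ⊆ idealizer (tensorK (C : Set (H →L[ℂ] H))) := by
  intro X hX Y hY
  have hA : ∀ a ∈ (C : Set (H →L[ℂ] H)), ∀ b ∈ (C : Set (H →L[ℂ] H)), a * b ∈ C :=
    fun a ha b hb => C.mul_mem ha hb
  exact ⟨mul_mem_tensorK hA hX hY, mul_mem_tensorK hA hY hX⟩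

theorem entry_mul (T : L2 H →L[ℂ] L2 H) (c : H →L[ℂ] H) (k j : ℕ) :
    entryL k j T * c = entryL k 0 (T * Eij c j 0) := by
  apply ContinuousLinearMap.ext
  intro ξ
  rw [ContinuousLinearMap.mul_apply, entryL_apply, entryL_apply,
    ContinuousLinearMap.mul_apply, Eij_single, if_pos rfl]

theorem mul_entry (T : L2 H →L[ℂ] L2 H) (c : H →L[ℂ] H) (k j : ℕ) :
    c * entryL k j T = entryL 0 j (Eij c 0 k * T) := by
  apply ContinuousLinearMap.ext
  intro ξ
  rw [ContinuousLinearMap.mul_apply, entryL_apply, entryL_apply,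
    ContinuousLinearMap.mul_apply, Eij_apply, lp.single_apply_self]

theorem entryL_mem_idealizer (C : NonUnitalStarSubalgebra ℂ (H →L[ℂ] H))
    (hC : IsClosed (C : Set (H →L[ℂ] H))) {T : L2 H →L[ℂ] L2 H}
    (hT : T ∈ idealizer (tensorK (C : Set (H →L[ℂ] H)))) (k j : ℕ) :
    entryL k j T ∈ idealizer (C : Set (H →L[ℂ] H)) := by
  intro c hc
  constructor
  · rw [entry_mul]
    exact entryL_mem_of_mem_tensorK C hC k 0 (hT _ (Eij_mem_tensorK hc j 0)).1
  · rw [mul_entry]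
    exact entryL_mem_of_mem_tensorK C hC 0 j (hT _ (Eij_mem_tensorK hc 0 k)).2

/-- For a nondegenerately acting C*-subalgebra `C ⊆ B(H)`, identifying
multiplier algebras with idealizers, one has `Z(M(C ⊗ K)) = Z(M(C)) ⊗ ℂI`, i.e. the center of
the idealizer of `C ⊗ K` is `{S ⊗ I : S ∈ Z(M(C))}`. -/
theorem stable_iso_stmt3
    (C : NonUnitalStarSubalgebra ℂ (H →L[ℂ] H))
    (hC : IsClosed (C : Set (H →L[ℂ] H)))
    (hnondeg : Dense (↑(Submodule.span ℂ {x : H | ∃ c ∈ C, ∃ ξ : H, x = c ξ}) : Set H)) :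
    centerSet (idealizer (tensorK (C : Set (H →L[ℂ] H)))) =
      amplify '' centerSet (idealizer (C : Set (H →L[ℂ] H))) := by
  apply Set.Subset.antisymm
  · -- Z(M(C⊗K)) ⊆ amplify '' Z(M(C))
    rintro T ⟨hTm, hTc⟩
    have hcomm_E : ∀ c ∈ (C : Set (H →L[ℂ] H)), ∀ i j : ℕ, T * Eij c i j = Eij c i j * T :=
      fun c hc i j => hTc _ (tensorK_subset_idealizer C (Eij_mem_tensorK hc i j))
    -- off-diagonal entries vanish
    have hoff : ∀ k i : ℕ, k ≠ i → entryL k i T = 0 := by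
      intro k i hki
      refine ext_nondeg C hnondeg ?_
      intro c hc ξ
      have h1 := congrArg (fun (y : L2 H) => y k)
        (congrArg (fun (X : L2 H →L[ℂ] L2 H) => X (lp.single 2 i ξ)) (hcomm_E c hc i i))
      simp only [ContinuousLinearMap.mul_apply] at h1
      rw [Eij_single, if_pos rfl, Eij_apply, lp.single_apply_ne 2 i _ hki] at h1
      simpa using h1
    -- diagonal entries intertwine with C
    have hdiag : ∀ i j : ℕ, ∀ c ∈ (C : Set (H →L[ℂ] H)), ∀ ξ : H,
        entryL i i T (c ξ) = c (entryL j j T ξ) := by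
      intro i j c hc ξ
      have h1 := congrArg (fun (y : L2 H) => y i)
        (congrArg (fun (X : L2 H →L[ℂ] L2 H) => X (lp.single 2 j ξ)) (hcomm_E c hc i j))
      simp only [ContinuousLinearMap.mul_apply] at h1
      rw [Eij_single, if_pos rfl, Eij_apply, lp.single_apply_self] at h1
      simpa using h1
    have hdiag' : ∀ m : ℕ, entryL m m T = entryL (H := H) 0 0 T := by
      intro m
      refine ext_nondeg C hnondeg ?_
      intro c hc ξ
      rw [hdiag m 0 c hc ξ, ← hdiag 0 0 c hc ξ]
    have hTamp : T = amplify (entryL 0 0 T) := by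
      apply ext_of_singles
      intro m ξ
      rw [amplify_single]
      apply lp.ext
      funext k
      by_cases h : k = m
      · subst h
        rw [lp.single_apply_self]
        exact ContinuousLinearMap.ext_iff.1 (hdiag' k) ξ
      · rw [lp.single_apply_ne 2 m _ h]
        have := ContinuousLinearMap.ext_iff.1 (hoff k m h) ξ
        simpa using this
    have hSid : entryL 0 0 T ∈ idealizer (C : Set (H →L[ℂ] H)) :=
      entryL_mem_idealizer C hC hTm 0 0
    have hScomm : ∀ R ∈ idealizer (C : Set (H →L[ℂ] H)),
        entryL 0 0 T * R = R * entryL 0 0 T := by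
      intro R hR
      have h1 : T * amplify R = amplify R * T := hTc _ (amplify_mem_idealizer C hR)
      rw [hTamp] at h1
      apply ContinuousLinearMap.ext
      intro ξ
      have h2 := congrArg (fun (y : L2 H) => y 0)
        (congrArg (fun (X : L2 H →L[ℂ] L2 H) => X (lp.single 2 0 ξ)) h1)
      simp only [ContinuousLinearMap.mul_apply, amplify_apply, lp.single_apply_self] at h2
      simpa [ContinuousLinearMap.mul_apply] using h2
    exact ⟨entryL 0 0 T, ⟨hSid, hScomm⟩, hTamp.symm⟩
  · -- amplify '' Z(M(C)) ⊆ Z(M(C⊗K))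
    rintro T ⟨S, ⟨hSid, hScomm⟩, rfl⟩
    refine ⟨amplify_mem_idealizer C hSid, ?_⟩
    intro T' hT'
    apply ext_of_singles
    intro j ξ
    have hE : ∀ k : ℕ, S (entryL k j T' ξ) = entryL k j T' (S ξ) := by
      intro k
      have := hScomm (entryL k j T') (entryL_mem_idealizer C hC hT' k j)
      exact ContinuousLinearMap.ext_iff.1 this ξ
    rw [ContinuousLinearMap.mul_apply, ContinuousLinearMap.mul_apply, amplify_single]
    apply lp.ext
    funext k
    show S ((T' (lp.single 2 j ξ)) k) = (T' (lp.single 2 j (S ξ))) k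
    exact hE k
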